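/- Let h, w ≥ 7 be integers. Then there exists a 2-dimensional binary word W : Fin h × Fin w → Bool with every filled cell having at most 2 filled orthogonal neighbors and number of filled cells at least 2hw/3 + 2 if h ≡ w ≡ 0 (mod 3); at least 2hw/3 + 4/3 if h ≡ w (mod 3) and h not ≡ 0 (mod 3); at least 2hw/3 + 1 if exactly one of h, w is ≡ 0 (mod 3); and at least 2hw/3 + 2/3 otherwise. (In each case the stated quantity is an integer.) -/

import Mathlib

abbrev cellAdj {h w : ℕ} (p q : Fin h × Fin w) : Prop :=
  (p.1 = q.1 ∧ (p.2.val + 1 = q.2.val ∨ q.2.val + 1 = p.2.val)) ∨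
  (p.2 = q.2 ∧ (p.1.val + 1 = q.1.val ∨ q.1.val + 1 = p.1.val))

/-- number of filled orthogonal neighbors of `p` -/
def degW {h w : ℕ} (W : Fin h × Fin w → Bool) (p : Fin h × Fin w) : ℕ :=
  (Finset.univ.filter (fun q => cellAdj p q ∧ W q = true)).card

/-- every filled cell has at most `d` filled orthogonal neighbors -/
def degLEW {h w : ℕ} (W : Fin h × Fin w → Bool) (d : ℕ) : Prop :=
  ∀ p, W p = true → degW W p ≤ d

/-- number of filled cells -/
def filledCount {h w : ℕ} (W : Fin h × Fin w → Bool) : ℕ :=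
  (Finset.univ.filter (fun p => W p = true)).card

/-! ### The construction: diagonal stripes plus two corner cells -/

def condP (h w i j : ℕ) : Prop :=
  (i + j) % 3 ≠ (h - 1) % 3 ∨ (i = h - 1 ∧ j = 0) ∨ (i = 0 ∧ j = w - 1 ∧ w % 3 = h % 3)

instance condPdec (h w i j : ℕ) : Decidable (condP h w i j) := by unfold condP; infer_instance

def myW (h w : ℕ) (p : Fin h × Fin w) : Bool := decide (condP h w p.1.val p.2.val)

/-! ### Degree bound -/

set_option maxHeartbeats 1600000 in
lemma nbr_char (h w pi pj : ℕ) (hh : 7 ≤ h) (hw : 7 ≤ w) (hpi : pi < h) (hpj : pj < w)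
    (hp : condP h w pi pj) :
    ∃ a1 a2 b1 b2 : ℕ, ∀ qi qj, qi < h → qj < w →
      ((pi = qi ∧ (pj + 1 = qj ∨ qj + 1 = pj)) ∨ (pj = qj ∧ (pi + 1 = qi ∨ qi + 1 = pi))) →
      condP h w qi qj → (qi = a1 ∧ qj = a2) ∨ (qi = b1 ∧ qj = b2) := by
  unfold condP at hp ⊢
  by_cases hs : (pi + pj) % 3 = (h - 1) % 3
  · -- p is a special corner
    by_cases h1a : pi = h - 1 ∧ pj = 0
    · exact ⟨h - 2, 0, h - 1, 1, by intro qi qj _ _ hadj _; omega⟩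
    · refine ⟨1, w - 1, 0, w - 2, by intro qi qj _ _ hadj _; omega⟩
  · by_cases hs1 : (pi + pj) % 3 = ((h - 1) % 3 + 1) % 3
    · by_cases h2a : pi = h - 1 ∧ pj = 1
      · exact ⟨h - 1, 0, h - 1, 2, by intro qi qj hqi hqj hadj hq; omega⟩
      · by_cases h2b : pi = 1 ∧ pj = w - 1
        · exact ⟨0, w - 1, 2, w - 1, by intro qi qj hqi hqj hadj hq; omega⟩
        · exact ⟨pi + 1, pj, pi, pj + 1, by intro qi qj hqi hqj hadj hq; omega⟩
    · by_cases h3a : pi = h - 2 ∧ pj = 0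
      · exact ⟨h - 3, 0, h - 1, 0, by intro qi qj hqi hqj hadj hq; omega⟩
      · by_cases h3b : pi = 0 ∧ pj = w - 2
        · exact ⟨0, w - 3, 0, w - 1, by intro qi qj hqi hqj hadj hq; omega⟩
        · exact ⟨pi - 1, pj, pi, pj - 1, by intro qi qj hqi hqj hadj hq; omega⟩

lemma myW_deg (h w : ℕ) (hh : 7 ≤ h) (hw : 7 ≤ w) : degLEW (myW h w) 2 := by
  intro p hp
  by_contra hcon
  push_neg at hcon
  rw [degW, Finset.two_lt_card_iff] at hcon
  obtain ⟨a, b, c, ha, hb, hc, hab, hac, hbc⟩ := hcon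
  rw [myW, decide_eq_true_iff] at hp
  obtain ⟨A1, A2, B1, B2, hkey⟩ := nbr_char h w p.1.val p.2.val hh hw p.1.isLt p.2.isLt hp
  rw [Finset.mem_filter] at ha hb hc
  obtain ⟨-, ha1, ha2⟩ := ha
  obtain ⟨-, hb1, hb2⟩ := hb
  obtain ⟨-, hc1, hc2⟩ := hc
  rw [myW, decide_eq_true_iff] at ha2 hb2 hc2
  have ea := hkey a.1.val a.2.val a.1.isLt a.2.isLt (by
    rcases ha1 with ⟨e, r⟩ | ⟨e, r⟩
    · exact Or.inl ⟨congrArg Fin.val e, r⟩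
    · exact Or.inr ⟨congrArg Fin.val e, r⟩) ha2
  have eb := hkey b.1.val b.2.val b.1.isLt b.2.isLt (by
    rcases hb1 with ⟨e, r⟩ | ⟨e, r⟩
    · exact Or.inl ⟨congrArg Fin.val e, r⟩
    · exact Or.inr ⟨congrArg Fin.val e, r⟩) hb2
  have ec := hkey c.1.val c.2.val c.1.isLt c.2.isLt (by
    rcases hc1 with ⟨e, r⟩ | ⟨e, r⟩
    · exact Or.inl ⟨congrArg Fin.val e, r⟩
    · exact Or.inr ⟨congrArg Fin.val e, r⟩) hc2
  have eqab : ∀ x y : Fin h × Fin w, x.1.val = y.1.val → x.2.val = y.2.val → x = y := by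
    intro x y e1 e2
    exact Prod.ext (Fin.ext e1) (Fin.ext e2)
  rcases ea with ⟨u1, u2⟩ | ⟨u1, u2⟩ <;> rcases eb with ⟨v1, v2⟩ | ⟨v1, v2⟩ <;>
    rcases ec with ⟨x1, x2⟩ | ⟨x1, x2⟩
  · exact hab (eqab a b (by omega) (by omega))
  · exact hab (eqab a b (by omega) (by omega))
  · exact hac (eqab a c (by omega) (by omega))
  · exact hbc (eqab b c (by omega) (by omega))
  · exact hbc (eqab b c (by omega) (by omega))
  · exact hac (eqab a c (by omega) (by omega))
  · exact hab (eqab a b (by omega) (by omega))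
  · exact hab (eqab a b (by omega) (by omega))

/-! ### Counting -/

def Nc (h w c : ℕ) : ℕ :=
  ∑ i ∈ Finset.range h, ∑ j ∈ Finset.range w, if (i + j) % 3 ≠ c then 1 else 0

lemma Nc_w (h w c : ℕ) (hc : c < 3) : Nc h (w + 3) c = Nc h w c + 2 * h := by
  unfold Nc
  have step : ∀ i, (∑ j ∈ Finset.range (w + 3), if (i + j) % 3 ≠ c then 1 else 0)
      = (∑ j ∈ Finset.range w, if (i + j) % 3 ≠ c then 1 else 0) + 2 := by
    intro i
    rw [Finset.sum_range_succ, Finset.sum_range_succ, Finset.sum_range_succ]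
    have : ((if (i + w) % 3 ≠ c then 1 else 0) + (if (i + (w+1)) % 3 ≠ c then 1 else 0)
        + (if (i + (w+2)) % 3 ≠ c then (1:ℕ) else 0)) = 2 := by
      split_ifs <;> omega
    omega
  rw [Finset.sum_congr rfl (fun i _ => step i), Finset.sum_add_distrib]
  simp [mul_comm]

lemma Nc_h (h w c : ℕ) (hc : c < 3) : Nc (h + 3) w c = Nc h w c + 2 * w := by
  unfold Nc
  rw [Finset.sum_range_succ, Finset.sum_range_succ, Finset.sum_range_succ]
  have : ((∑ j ∈ Finset.range w, if (h + j) % 3 ≠ c then 1 else 0)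
      + (∑ j ∈ Finset.range w, if (h + 1 + j) % 3 ≠ c then 1 else 0)
      + (∑ j ∈ Finset.range w, if (h + 2 + j) % 3 ≠ c then (1:ℕ) else 0)) = 2 * w := by
    rw [← Finset.sum_add_distrib, ← Finset.sum_add_distrib]
    rw [Finset.sum_congr rfl (fun j _ => by split_ifs <;> omega :
      ∀ j ∈ Finset.range w, ((if (h + j) % 3 ≠ c then 1 else 0) + (if (h + 1 + j) % 3 ≠ c then 1 else 0)
        + (if (h + 2 + j) % 3 ≠ c then (1:ℕ) else 0)) = 2)]
    simp [mul_comm]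
  omega

def Bnd (h w n : ℕ) : Prop :=
  (h % 3 = 0 ∧ w % 3 = 0 → 2 * h * w / 3 + 2 ≤ n) ∧
  (h % 3 = w % 3 ∧ h % 3 ≠ 0 → (2 * h * w + 4) / 3 ≤ n) ∧
  ((h % 3 = 0 ∧ w % 3 ≠ 0) ∨ (h % 3 ≠ 0 ∧ w % 3 = 0) → 2 * h * w / 3 + 1 ≤ n) ∧
  (h % 3 ≠ w % 3 ∧ h % 3 ≠ 0 ∧ w % 3 ≠ 0 → (2 * h * w + 2) / 3 ≤ n)

def NE (h w : ℕ) : ℕ := Nc h w ((h - 1) % 3) + 1 + (if w % 3 = h % 3 then 1 else 0)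

lemma step_w (h w : ℕ) (ih : Bnd h w (NE h w)) : Bnd h (w + 3) (NE h (w + 3)) := by
  unfold NE at ih ⊢
  rw [Nc_w _ _ _ (by omega), show (w + 3) % 3 = w % 3 from by omega]
  unfold Bnd at ih ⊢
  simp only [show (w + 3) % 3 = w % 3 from by omega,
    show 2 * h * (w + 3) = 2 * h * w + (2*h + 2*h + 2*h) from by ring]
  obtain ⟨i1, i2, i3, i4⟩ := ih
  generalize 2 * h * w = K at *
  generalize Nc h w ((h - 1) % 3) = M at *
  split_ifs at * <;> refine ⟨?_, ?_, ?_, ?_⟩ <;> intro hc <;> omega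

lemma step_h (h w : ℕ) (hh : 7 ≤ h) (ih : Bnd h w (NE h w)) : Bnd (h + 3) w (NE (h + 3) w) := by
  unfold NE at ih ⊢
  rw [show (h + 3 - 1) % 3 = (h - 1) % 3 from by omega, Nc_h _ _ _ (by omega),
    show (h + 3) % 3 = h % 3 from by omega]
  unfold Bnd at ih ⊢
  simp only [show (h + 3) % 3 = h % 3 from by omega,
    show 2 * (h + 3) * w = 2 * h * w + (2*w + 2*w + 2*w) from by ring]
  obtain ⟨i1, i2, i3, i4⟩ := ih
  generalize 2 * h * w = K at *
  generalize Nc h w ((h - 1) % 3) = M at *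
  split_ifs at * <;> refine ⟨?_, ?_, ?_, ?_⟩ <;> intro hc <;> omega

lemma ind3 (P : ℕ → Prop) (h7 : P 7) (h8 : P 8) (h9 : P 9)
    (step : ∀ n, 7 ≤ n → P n → P (n + 3)) : ∀ n, 7 ≤ n → P n := by
  intro n
  induction n using Nat.strong_induction_on with
  | _ n ih =>
    intro hn
    by_cases h9' : n ≤ 9
    · interval_cases n <;> assumption
    · have e : n - 3 + 3 = n := by omega
      rw [← e]
      exact step (n - 3) (by omega) (ih (n - 3) (by omega) (by omega))

lemma key : ∀ h, 7 ≤ h → ∀ w, 7 ≤ w → Bnd h w (NE h w) := by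
  apply ind3
  · exact ind3 _ (by unfold Bnd NE Nc; decide) (by unfold Bnd NE Nc; decide)
      (by unfold Bnd NE Nc; decide) (fun w _ ih => step_w 7 w ih)
  · exact ind3 _ (by unfold Bnd NE Nc; decide) (by unfold Bnd NE Nc; decide)
      (by unfold Bnd NE Nc; decide) (fun w _ ih => step_w 8 w ih)
  · exact ind3 _ (by unfold Bnd NE Nc; decide) (by unfold Bnd NE Nc; decide)
      (by unfold Bnd NE Nc; decide) (fun w _ ih => step_w 9 w ih)
  · exact fun h hh ih w hw => step_h h w hh (ih w hw)

lemma count_eq (h w : ℕ) : filledCount (myW h w)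
    = ∑ i ∈ Finset.range h, ∑ j ∈ Finset.range w, if condP h w i j then 1 else 0 := by
  rw [filledCount, Finset.card_filter, Fintype.sum_prod_type]
  rw [← Fin.sum_univ_eq_sum_range (fun i => ∑ j ∈ Finset.range w, if condP h w i j then 1 else 0) h]
  apply Finset.sum_congr rfl
  intro a _
  rw [← Fin.sum_univ_eq_sum_range (fun j => if condP h w a.val j then 1 else 0) w]
  apply Finset.sum_congr rfl
  intro b _
  simp [myW]

lemma count_ge (h w : ℕ) (hh : 7 ≤ h) (hw : 7 ≤ w) : NE h w ≤ filledCount (myW h w) := by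
  rw [count_eq]
  have hB : (∑ i ∈ Finset.range h, ∑ j ∈ Finset.range w,
      if i = h - 1 ∧ j = 0 then (1:ℕ) else 0) = 1 := by
    have inner : ∀ i ∈ Finset.range h, (∑ j ∈ Finset.range w,
        if i = h - 1 ∧ j = 0 then (1:ℕ) else 0) = if i = h - 1 then 1 else 0 := by
      intro i _
      by_cases e : i = h - 1
      · simp only [e, true_and, if_true]
        rw [Finset.sum_ite_eq' (Finset.range w) 0 (fun _ => (1:ℕ))]
        simp [Nat.pos_of_ne_zero]
        omega
      · simp [e]
    rw [Finset.sum_congr rfl inner, Finset.sum_ite_eq' (Finset.range h) (h-1) (fun _ => (1:ℕ))]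
    simp
    omega
  have hC : (∑ i ∈ Finset.range h, ∑ j ∈ Finset.range w,
      if i = 0 ∧ j = w - 1 ∧ w % 3 = h % 3 then (1:ℕ) else 0)
      = (if w % 3 = h % 3 then 1 else 0) := by
    by_cases hm : w % 3 = h % 3
    · simp only [hm, and_true]
      have inner : ∀ i ∈ Finset.range h, (∑ j ∈ Finset.range w,
          if i = 0 ∧ j = w - 1 then (1:ℕ) else 0) = if i = 0 then 1 else 0 := by
        intro i _
        by_cases e : i = 0
        · simp only [e, true_and, if_true]
          rw [Finset.sum_ite_eq' (Finset.range w) (w-1) (fun _ => (1:ℕ))]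
          simp
          omega
        · simp [e]
      rw [Finset.sum_congr rfl inner, Finset.sum_ite_eq' (Finset.range h) 0 (fun _ => (1:ℕ))]
      simp
      omega
    · simp [hm]
  have expand : NE h w = ∑ i ∈ Finset.range h, ∑ j ∈ Finset.range w,
      ((if (i + j) % 3 ≠ (h - 1) % 3 then (1:ℕ) else 0)
        + (if i = h - 1 ∧ j = 0 then 1 else 0)
        + (if i = 0 ∧ j = w - 1 ∧ w % 3 = h % 3 then 1 else 0)) := by
    simp only [Finset.sum_add_distrib]
    rw [hB, hC]
    rfl
  rw [expand]
  refine Finset.sum_le_sum (fun i hi => Finset.sum_le_sum (fun j hj => ?_))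
  rw [Finset.mem_range] at hi hj
  by_cases hc : condP h w i j
  · rw [if_pos hc]; unfold condP at hc; split_ifs <;> omega
  · rw [if_neg hc]; unfold condP at hc; split_ifs <;> omega

theorem stmt17 (h w : ℕ) (hh : 7 ≤ h) (hw : 7 ≤ w) :
    ∃ W : Fin h × Fin w → Bool, degLEW W 2 ∧
      (h % 3 = 0 ∧ w % 3 = 0 → 2 * h * w / 3 + 2 ≤ filledCount W) ∧
      (h % 3 = w % 3 ∧ h % 3 ≠ 0 → (2 * h * w + 4) / 3 ≤ filledCount W) ∧
      ((h % 3 = 0 ∧ w % 3 ≠ 0) ∨ (h % 3 ≠ 0 ∧ w % 3 = 0) →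
        2 * h * w / 3 + 1 ≤ filledCount W) ∧
      (h % 3 ≠ w % 3 ∧ h % 3 ≠ 0 ∧ w % 3 ≠ 0 → (2 * h * w + 2) / 3 ≤ filledCount W) := by
  obtain ⟨k1, k2, k3, k4⟩ := key h hh w hw
  have hcg := count_ge h w hh hw
  exact ⟨myW h w, myW_deg h w hh hw,
    fun hc => le_trans (k1 hc) hcg, fun hc => le_trans (k2 hc) hcg,
    fun hc => le_trans (k3 hc) hcg, fun hc => le_trans (k4 hc) hcg⟩
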